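/- arXiv:1911.06399 — 3 statements merged into one kernel-verified Lean document; each statement's English description precedes it below -/
import Mathlib

section
/- In any model category, a cofibration f : A → B is a weak equivalence if and only if f has the left lifting property with respect to all fibrations between fibrant objects. -/
open CategoryTheory CategoryTheory.Limits

universe v u

/-- `f` is a retract of `g` in the arrow category. -/
def RetractOf {C : Type u} [Category.{v} C] {X Y Z W : C} (f : X ⟶ Y) (g : Z ⟶ W) : Prop :=
  ∃ (i : X ⟶ Z) (r : Z ⟶ X) (i' : Y ⟶ W) (r' : W ⟶ Y),
    i ≫ r = 𝟙 X ∧ i' ≫ r' = 𝟙 Y ∧ i ≫ g = f ≫ i' ∧ g ≫ r' = r ≫ f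

/-- A (Quillen) model structure on a category `C`: classes of weak equivalences,
cofibrations and fibrations satisfying two-out-of-three, retract closure,
lifting and factorization axioms. -/
structure ModelStructure (C : Type u) [Category.{v} C] where
  W : MorphismProperty C
  Cof : MorphismProperty C
  Fib : MorphismProperty C
  W_id : ∀ X : C, W (𝟙 X)
  W_comp : ∀ {X Y Z : C} (f : X ⟶ Y) (g : Y ⟶ Z), W f → W g → W (f ≫ g)
  W_cancel_left : ∀ {X Y Z : C} (f : X ⟶ Y) (g : Y ⟶ Z), W g → W (f ≫ g) → W f
  W_cancel_right : ∀ {X Y Z : C} (f : X ⟶ Y) (g : Y ⟶ Z), W f → W (f ≫ g) → W g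
  W_retract : ∀ {X Y Z W' : C} {f : X ⟶ Y} {g : Z ⟶ W'}, RetractOf f g → W g → W f
  Cof_retract : ∀ {X Y Z W' : C} {f : X ⟶ Y} {g : Z ⟶ W'}, RetractOf f g → Cof g → Cof f
  Fib_retract : ∀ {X Y Z W' : C} {f : X ⟶ Y} {g : Z ⟶ W'}, RetractOf f g → Fib g → Fib f
  lift_cof_trivFib : ∀ {A B X Y : C} (i : A ⟶ B) (p : X ⟶ Y),
    Cof i → Fib p → W p → HasLiftingProperty i p
  lift_trivCof_fib : ∀ {A B X Y : C} (i : A ⟶ B) (p : X ⟶ Y),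
    Cof i → W i → Fib p → HasLiftingProperty i p
  factor_cof_trivFib : ∀ {X Y : C} (f : X ⟶ Y),
    ∃ (Z : C) (i : X ⟶ Z) (p : Z ⟶ Y), Cof i ∧ Fib p ∧ W p ∧ i ≫ p = f
  factor_trivCof_fib : ∀ {X Y : C} (f : X ⟶ Y),
    ∃ (Z : C) (i : X ⟶ Z) (p : Z ⟶ Y), Cof i ∧ W i ∧ Fib p ∧ i ≫ p = f

/-- Fibrations are closed under composition (retract argument). -/
lemma ModelStructure.fib_comp {C : Type u} [Category.{v} C] (M : ModelStructure C)
    {X Y Z : C} (p : X ⟶ Y) (q : Y ⟶ Z) (hp : M.Fib p) (hq : M.Fib q) :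
    M.Fib (p ≫ q) := by
  obtain ⟨E, i, r, hi_cof, hi_w, hr_fib, hfac⟩ := M.factor_trivCof_fib (p ≫ q)
  haveI := M.lift_trivCof_fib i p hi_cof hi_w hp
  haveI := M.lift_trivCof_fib i q hi_cof hi_w hq
  haveI : HasLiftingProperty i (p ≫ q) := inferInstance
  have sq : CommSq (𝟙 X) i (p ≫ q) r := ⟨by simp [hfac]⟩
  exact M.Fib_retract
    ⟨i, sq.lift, 𝟙 Z, 𝟙 Z, sq.fac_left, by simp, by simp [hfac], by simp [sq.fac_right]⟩
    hr_fib

/-- **Cofibrations that are weak equivalences via lifting.** In any model category,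
a cofibration `f : A ⟶ B` is a weak equivalence if and only if it has the left
lifting property with respect to all fibrations between fibrant objects. -/
theorem cofibration_weq_iff_llp_fibrations_between_fibrant
    {C : Type u} [Category.{v} C] [HasLimits C] [HasColimits C]
    (M : ModelStructure C) {A B : C} (f : A ⟶ B) (hf : M.Cof f) :
    M.W f ↔
      ∀ {X Y : C} (p : X ⟶ Y), M.Fib p →
        M.Fib (terminal.from X) → M.Fib (terminal.from Y) →
          HasLiftingProperty f p := by
  constructor
  · intro hw X Y p hp _ _
    exact M.lift_trivCof_fib f p hf hw hp
  · intro H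
    -- fibrant replacement of `B`
    obtain ⟨RB, iB, pB, hiB_cof, hiB_w, hpB_fib, hpB_fac⟩ :=
      M.factor_trivCof_fib (terminal.from B)
    have hRB : M.Fib (terminal.from RB) := by
      have : terminal.from RB = pB := terminal.hom_ext _ _
      rw [this]; exact hpB_fib
    -- factor `f ≫ iB` as a trivial cofibration followed by a fibration
    obtain ⟨Z, i, q, hi_cof, hi_w, hq_fib, hfac⟩ := M.factor_trivCof_fib (f ≫ iB)
    have hZ : M.Fib (terminal.from Z) := by
      have : terminal.from Z = q ≫ terminal.from RB := terminal.hom_ext _ _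
      rw [this]; exact M.fib_comp _ _ hq_fib hRB
    -- `f ≫ iB` has LLP against `q`, a fibration between fibrant objects
    haveI : HasLiftingProperty f q := H q hq_fib hZ hRB
    haveI := M.lift_trivCof_fib iB q hiB_cof hiB_w hq_fib
    haveI : HasLiftingProperty (f ≫ iB) q := inferInstance
    have sq : CommSq i (f ≫ iB) q (𝟙 RB) := ⟨by simp [hfac]⟩
    -- the lift exhibits `f ≫ iB` as a retract of the trivial cofibration `i`
    have hret : RetractOf (f ≫ iB) i :=
      ⟨𝟙 A, 𝟙 A, sq.lift, q, by simp, sq.fac_right, by simp [sq.fac_left], by simp [hfac]⟩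
    have hw : M.W (f ≫ iB) := M.W_retract hret hi_w
    exact M.W_cancel_left f iB hiB_w hw
end

section
/- An adjunction F : C ⇄ D : G between model categories is a Quillen adjunction provided that F preserves cofibrations and G preserves fibrations between fibrant objects. -/
open CategoryTheory CategoryTheory.Limits

universe v u

section Aux

variable {E : Type u} [Category.{v} E]

/-- A map with RLP against all trivial cofibrations is a fibration (retract argument). -/
lemma aux_fib_of_rlp (M : ModelStructure E) {X Y : E} (p : X ⟶ Y)
    (h : ∀ {A B : E} (i : A ⟶ B), M.Cof i → M.W i → HasLiftingProperty i p) :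
    M.Fib p := by
  obtain ⟨Z, i, q, hic, hiw, hqf, hfac⟩ := M.factor_trivCof_fib p
  have : HasLiftingProperty i p := h i hic hiw
  have sq : CommSq (𝟙 X) i p q := ⟨by simp [hfac]⟩
  refine M.Fib_retract (f := p) (g := q)
    ⟨i, sq.lift, 𝟙 Y, 𝟙 Y, sq.fac_left, by simp, by simp [hfac], by simp [sq.fac_right]⟩ hqf

lemma aux_fib_comp (M : ModelStructure E) {X Y Z : E} (p : X ⟶ Y) (q : Y ⟶ Z)
    (hp : M.Fib p) (hq : M.Fib q) : M.Fib (p ≫ q) := by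
  apply aux_fib_of_rlp
  intro A B i hic hiw
  have := M.lift_trivCof_fib i p hic hiw hp
  have := M.lift_trivCof_fib i q hic hiw hq
  infer_instance

/-- If `j : A ⟶ T` is a trivial cofibration and `m : T ⟶ T` satisfies `j ≫ m = j`,
then `m` is a weak equivalence (path object argument). -/
lemma aux_W_of_under (M : ModelStructure E) [HasLimits E] {A T : E} (j : A ⟶ T)
    (hc : M.Cof j) (hw : M.W j) (m : T ⟶ T) (hm : j ≫ m = j) : M.W m := by
  obtain ⟨P, s, π, hsc, hsw, hπf, hfac⟩ := M.factor_trivCof_fib (prod.lift (𝟙 T) (𝟙 T))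
  have hπ1 : s ≫ π ≫ prod.fst = 𝟙 T := by rw [← Category.assoc, hfac]; exact prod.lift_fst _ _
  have hπ2 : s ≫ π ≫ prod.snd = 𝟙 T := by rw [← Category.assoc, hfac]; exact prod.lift_snd _ _
  have hp0 : M.W (π ≫ prod.fst) := M.W_cancel_right s _ hsw (hπ1 ▸ M.W_id T)
  have hp1 : M.W (π ≫ prod.snd) := M.W_cancel_right s _ hsw (hπ2 ▸ M.W_id T)
  have : HasLiftingProperty j π := M.lift_trivCof_fib j π hc hw hπf
  have sq : CommSq (j ≫ s) j π (prod.lift (𝟙 T) m) := by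
    constructor
    apply Limits.prod.hom_ext <;> simp [hfac, hm]
  have h0 : sq.lift ≫ π ≫ prod.fst = 𝟙 T := by
    rw [← Category.assoc, sq.fac_right]; exact prod.lift_fst _ _
  have h1 : sq.lift ≫ π ≫ prod.snd = m := by
    rw [← Category.assoc, sq.fac_right]; exact prod.lift_snd _ _
  have hH : M.W sq.lift := M.W_cancel_left _ _ hp0 (by rw [h0]; exact M.W_id T)
  exact h1 ▸ M.W_comp _ _ hH hp1

/-- A cofibration with the LLP against fibrations between fibrant objects is a
weak equivalence. -/
lemma aux_W_of_llp (M : ModelStructure E) [HasLimits E] {A B : E} (i : A ⟶ B)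
    (hc : M.Cof i)
    (hl : ∀ {X Y : E} (p : X ⟶ Y), M.Fib (terminal.from X) → M.Fib (terminal.from Y) →
      M.Fib p → HasLiftingProperty i p) : M.W i := by
  -- fibrant replacement of B
  obtain ⟨RB, jB, pB, hjBc, hjBw, hpBf, hpBfac⟩ := M.factor_trivCof_fib (terminal.from B)
  have hRB : M.Fib (terminal.from RB) := by
    have : terminal.from RB = pB := terminal.hom_ext _ _
    rwa [this]
  -- factor i ≫ jB
  obtain ⟨RA, jA, q, hjAc, hjAw, hqf, hqfac⟩ := M.factor_trivCof_fib (i ≫ jB)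
  have hRA : M.Fib (terminal.from RA) := by
    have : terminal.from RA = q ≫ terminal.from RB := terminal.hom_ext _ _
    rw [this]
    exact aux_fib_comp M q _ hqf hRB
  -- lift l : B ⟶ RA
  have hlift : HasLiftingProperty i q := hl q hRA hRB hqf
  have sq1 : CommSq jA i q jB := ⟨by rw [hqfac]⟩
  set l : B ⟶ RA := sq1.lift with hl_def
  have hl1 : i ≫ l = jA := sq1.fac_left
  have hl2 : l ≫ q = jB := sq1.fac_right
  -- lift k : RB ⟶ RA
  have : HasLiftingProperty jB q := M.lift_trivCof_fib jB q hjBc hjBw hqf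
  have sq2 : CommSq l jB q (𝟙 RB) := ⟨by simp [hl2]⟩
  set k : RB ⟶ RA := sq2.lift with hk_def
  have hk1 : jB ≫ k = l := sq2.fac_left
  have hk2 : k ≫ q = 𝟙 RB := sq2.fac_right
  -- m := q ≫ k fixes jA
  have hm : jA ≫ (q ≫ k) = jA := by
    rw [← Category.assoc, hqfac, Category.assoc, hk1, hl1]
  have hWm : M.W (q ≫ k) := aux_W_of_under M jA hjAc hjAw (q ≫ k) hm
  -- k is a retract of q ≫ k
  have hWk : M.W k := by
    refine M.W_retract (f := k) (g := q ≫ k)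
      ⟨k, q, 𝟙 RA, 𝟙 RA, hk2, by simp, ?_, by simp⟩ hWm
    rw [← Category.assoc, hk2]; simp
  have hWl : M.W l := hk1 ▸ M.W_comp jB k hjBw hWk
  exact M.W_cancel_left i l hWl (hl1 ▸ hjAw)

end Aux

/-- **Criterion for Quillen adjunctions.** An adjunction `F ⊣ U` between model
categories is a Quillen adjunction (i.e. `F` preserves cofibrations and trivial
cofibrations) provided that `F` preserves cofibrations and `U` preserves
fibrations between fibrant objects. -/
theorem quillen_adjunction_criterion
    {C : Type u} [Category.{v} C] [HasLimits C] [HasColimits C]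
    {D : Type u} [Category.{v} D] [HasLimits D] [HasColimits D]
    (MC : ModelStructure C) (MD : ModelStructure D)
    (F : C ⥤ D) (U : D ⥤ C) (adj : F ⊣ U)
    (hF : ∀ {A B : C} (f : A ⟶ B), MC.Cof f → MD.Cof (F.map f))
    (hU : ∀ {X Y : D} (p : X ⟶ Y),
      MD.Fib (terminal.from X) → MD.Fib (terminal.from Y) → MD.Fib p →
        MC.Fib (U.map p)) :
    (∀ {A B : C} (f : A ⟶ B), MC.Cof f → MD.Cof (F.map f)) ∧
    (∀ {A B : C} (f : A ⟶ B), MC.Cof f → MC.W f →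
      MD.Cof (F.map f) ∧ MD.W (F.map f)) := by
  refine ⟨fun f hf => hF f hf, fun f hc hw => ⟨hF f hc, ?_⟩⟩
  apply aux_W_of_llp MD (F.map f) (hF f hc)
  intro X Y p hX hY hp
  rw [adj.hasLiftingProperty_iff]
  exact MC.lift_trivCof_fib f (U.map p) hc hw (hU p hX hY hp)
end

section
/- If weak equivalences in a category with weak equivalences are closed under filtered colimits (in the sense that a natural transformation of filtered diagrams which is a levelwise weak equivalence induces a weak equivalence on colimits), then the same closure property holds after enlarging the class of weak equivalences (i.e., for any larger class of weak equivalences containing the original ones that is also detected levelwise from the smaller class by a left Bousfield localization-style condition: colimᵢ Cᵢ remains a homotopy colimit). -/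
open CategoryTheory CategoryTheory.Limits

universe v u

/-- A class of maps is closed under filtered colimits if a levelwise member of
the class between filtered diagrams induces a member of the class on colimits
(equivalently, filtered colimits compute homotopy colimits). -/
def ClosedUnderFilteredColimits {M : Type u} [Category.{v} M] [HasColimits M]
    (W : MorphismProperty M) : Prop :=
  ∀ (I : Type v) [SmallCategory I] [IsFiltered I] (F G : I ⥤ M) (α : F ⟶ G),
    (∀ i : I, W (α.app i)) → W (colimMap α)

/-- **Closure under filtered colimits is preserved by localization.** If the weak
equivalences `W` are closed under filtered colimits, then so is any larger class
`W'` containing `W` which is detected from `W` in a left Bousfield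
localization-style manner, i.e. via a localization functor `L` preserving
filtered colimits with `W' f ↔ W (L f)`: filtered colimits remain homotopy
colimits for `W'`. -/
theorem closedUnderFilteredColimits_of_localization
    {M : Type u} [Category.{v} M] [HasColimits M]
    (W W' : MorphismProperty M) (hiso : W.RespectsIso)
    (L : M ⥤ M) [PreservesFilteredColimits L]
    (hdetect : ∀ {X Y : M} (f : X ⟶ Y), W' f ↔ W (L.map f))
    (hsub : ∀ {X Y : M} (f : X ⟶ Y), W f → W' f)
    (hW : ClosedUnderFilteredColimits W) :
    ClosedUnderFilteredColimits W' := by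
  intro I _ _ F G α hα
  rw [hdetect]
  have key : L.map (colimMap α) =
      (preservesColimitIso L F).hom ≫ colimMap (Functor.whiskerRight α L) ≫
        (preservesColimitIso L G).inv := by
    apply (cancel_epi (preservesColimitIso L F).inv).mp
    ext j
    rw [Iso.inv_hom_id_assoc, ι_colimMap_assoc, Functor.whiskerRight_app,
      ι_preservesColimitIso_inv, ι_preservesColimitIso_inv_assoc,
      ← L.map_comp, ← L.map_comp, ι_colimMap]
  rw [key]
  rw [W.cancel_left_of_respectsIso, W.cancel_right_of_respectsIso]
  exact hW I (F ⋙ L) (G ⋙ L) (Functor.whiskerRight α L) fun i => (hdetect (α.app i)).mp (hα i)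
end
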